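/- arXiv:1402.1481 — 3 statements merged into one kernel-verified Lean document; each statement's English description precedes it below -/
import Mathlib

section
/- Let G be a finitely generated group with finite generating set S, and let Y ⊆ G be an infinite subset such that the pair (G,Y) has relative Property T. Then there exists C > 0 such that for every finite quotient Q of G and every function f from Q to a Hilbert space, for every y ∈ Y one has Σ_{g∈Q} ‖f(g·ȳ) − f(g)‖² ≤ C · Σ_{g∈Q, s∈S} ‖f(g·s̄) − f(g)‖², where ȳ and s̄ denote the images of y and s in Q. -/
open MeasureTheory Filter Set

noncomputable section

/-- The word distance on a group `G` with respect to a (symmetrized) generating set `S`. -/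
def wordDist {G : Type*} [Group G] (S : Set G) (x y : G) : ℕ :=
  sInf {n : ℕ | ∃ l : List G, l.length = n ∧ (∀ a ∈ l, a ∈ S ∨ a⁻¹ ∈ S) ∧ x⁻¹ * y = l.prod}

/-- A function `[0,∞) → [0,∞)` is proper if it tends to `∞` at `∞`. -/
def ProperFun (ρ : ℝ → ℝ) : Prop := Tendsto ρ atTop atTop

/-- A coarse embedding of a sequence of spaces (given by distance functions `d n`) into a
space `Y` with distance function `dY`. -/
def IsCoarseEmbeddingSeq {X : ℕ → Type*} (d : ∀ n, X n → X n → ℝ)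
    {Y : Type*} (dY : Y → Y → ℝ) (φ : ∀ n, X n → Y) : Prop :=
  ∃ ρ γ : ℝ → ℝ, ProperFun ρ ∧ ProperFun γ ∧
    ∀ n x y, ρ (d n x y) ≤ dY (φ n x) (φ n y) ∧ dY (φ n x) (φ n y) ≤ γ (d n x y)

/-- An affine isometric action of a group `G` on a (real) Hilbert space, given by an
orthogonal representation `π` together with a `1`-cocycle `b`. -/
structure AffIsomAction (G : Type) [Group G] where
  (H : Type)
  [normed : NormedAddCommGroup H]
  [ips : InnerProductSpace ℝ H]
  [complete : CompleteSpace H]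
  (π : G →* (H ≃ₗᵢ[ℝ] H))
  (b : G → H)
  (cocycle : ∀ g h : G, b (g * h) = π g (b h) + b g)

attribute [instance] AffIsomAction.normed AffIsomAction.ips AffIsomAction.complete

/-- The pair `(G, Y)` has relative Property (T): for every affine isometric action of `G`
on a Hilbert space, the orbits of `Y` are bounded. -/
def RelPropT (G : Type) [Group G] (Y : Set G) : Prop :=
  ∀ A : AffIsomAction G, ∀ v : A.H, ∃ M : ℝ, ∀ y ∈ Y, ‖A.π y v + A.b y‖ ≤ M

/-- `G`, finitely generated by `S`, has the Haagerup property: it admits an affine isometric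
action on a Hilbert space whose cocycle is a coarse embedding for the word metric of `S`. -/
def HasHaagerup (G : Type) [Group G] (S : Set G) : Prop :=
  ∃ A : AffIsomAction G, ∃ ρ γ : ℝ → ℝ, ProperFun ρ ∧ ProperFun γ ∧
    ∀ x y : G, ρ (wordDist S x y) ≤ ‖A.b x - A.b y‖ ∧ ‖A.b x - A.b y‖ ≤ γ (wordDist S x y)

/-- The diameter of a subset `A` of a graph `X` for the graph metric. -/
def setGraphDiam {V : Type*} (X : SimpleGraph V) (A : Set V) : ℕ :=
  sSup {k | ∃ x ∈ A, ∃ y ∈ A, X.dist x y = k}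

/-- A sequence of finite connected graphs of uniformly bounded degree, of cardinalities tending to
infinity, and with Cheeger constants uniformly bounded below, i.e. an expander. -/
structure IsExpanderSeq {V : ℕ → Type*} (X : ∀ n, SimpleGraph (V n)) : Prop where
  (finite : ∀ n, Finite (V n))
  (connected : ∀ n, (X n).Connected)
  (degBound : ∃ d : ℕ, ∀ n v, ((X n).neighborSet v).ncard ≤ d)
  (cardTop : Tendsto (fun n => Nat.card (V n)) atTop atTop)
  (cheeger : ∃ c : ℝ, 0 < c ∧ ∀ n (A : Set (V n)), A.Nonempty →
      2 * A.ncard ≤ Nat.card (V n) →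
      c * A.ncard ≤ ({e : V n × V n | e.1 ∈ A ∧ e.2 ∉ A ∧ (X n).Adj e.1 e.2}).ncard)

/-- A weak embedding of a sequence of finite graphs into a sequence of spaces with distance
functions `dY n`: the maps are uniformly Lipschitz and fibers of balls are asymptotically
negligible. -/
def IsWeakEmbedding {V : ℕ → Type*} (X : ∀ n, SimpleGraph (V n)) {Y : ℕ → Type*}
    (dY : ∀ n, Y n → Y n → ℝ) (φ : ∀ n, V n → Y n) : Prop :=
  (∃ K : ℝ, 0 < K ∧ ∀ n x y, dY n (φ n x) (φ n y) ≤ K * (X n).dist x y) ∧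
  ∀ R > (0:ℝ), ∀ ε > (0:ℝ), ∃ N : ℕ, ∀ n ≥ N, ∀ x : V n,
    (({x' : V n | dY n (φ n x') (φ n x) ≤ R}).ncard : ℝ) ≤ ε * Nat.card (V n)

end

noncomputable section

open scoped ENNReal

namespace RelPoincareAux

/-! ### Helpers: right-translation representation on `PiLp 2` over a finite group -/

variable {Q : Type} [Group Q] [Fintype Q] {E : Type} [NormedAddCommGroup E]
  [InnerProductSpace ℝ E]

instance instCompletePiLp {ι : Type} (E : ι → Type) [∀ i, NormedAddCommGroup (E i)]
    [∀ i, CompleteSpace (E i)] : CompleteSpace (PiLp 2 E) :=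
  inferInstance

/-- Right translation by `c` as a linear isometry of `PiLp 2 (fun _ : Q => E)`. -/
def shiftEquiv (c : Q) :
    (PiLp 2 fun _ : Q => E) ≃ₗᵢ[ℝ] (PiLp 2 fun _ : Q => E) where
  toLinearEquiv :=
    { toFun := fun F => (WithLp.equiv 2 (Q → E)).symm fun x => F (x * c)
      map_add' := fun _ _ => rfl
      map_smul' := fun _ _ => rfl
      invFun := fun F => (WithLp.equiv 2 (Q → E)).symm fun x => F (x * c⁻¹)
      left_inv := fun F => PiLp.ext fun x => by
        show F (x * c⁻¹ * c) = F x
        rw [inv_mul_cancel_right]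
      right_inv := fun F => PiLp.ext fun x => by
        show F (x * c * c⁻¹) = F x
        rw [mul_inv_cancel_right] }
  norm_map' := fun F => by
    have h1 : ∑ x : Q, ‖F (x * c)‖ ^ 2 = ∑ x : Q, ‖F x‖ ^ 2 :=
      Fintype.sum_equiv (Equiv.mulRight c) _ _ (fun x => rfl)
    have hL := PiLp.norm_sq_eq_of_L2 (fun _ : Q => E)
      ((WithLp.equiv 2 (Q → E)).symm fun x => F (x * c))
    have hR := PiLp.norm_sq_eq_of_L2 (fun _ : Q => E) F
    show ‖(WithLp.equiv 2 (Q → E)).symm fun x => F (x * c)‖ = ‖F‖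
    have h3 := congrArg Real.sqrt (hL.trans (h1.trans hR.symm))
    rwa [Real.sqrt_sq (norm_nonneg _), Real.sqrt_sq (norm_nonneg _)] at h3

@[simp] lemma shiftEquiv_apply (c : Q) (F : PiLp 2 fun _ : Q => E) (x : Q) :
    shiftEquiv c F x = F (x * c) := rfl

variable {G : Type} [Group G]

/-- The right-regular representation of `G` on `PiLp 2 (fun _ : Q => E)` through
a homomorphism `q : G →* Q`. -/
def shiftRep (E : Type) [NormedAddCommGroup E] [InnerProductSpace ℝ E] (q : G →* Q) :
    G →* ((PiLp 2 fun _ : Q => E) ≃ₗᵢ[ℝ] (PiLp 2 fun _ : Q => E)) :=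
  MonoidHom.mk' (fun g => shiftEquiv (q g)) (fun g h => by
    apply LinearIsometryEquiv.ext
    intro F
    apply PiLp.ext
    intro x
    show F (x * q (g * h)) = F (x * q g * q h)
    rw [map_mul, mul_assoc])

@[simp] lemma shiftRep_apply (q : G →* Q) (g : G) (F : PiLp 2 fun _ : Q => E) (x : Q) :
    shiftRep E q g F x = F (x * q g) := rfl

/-- Coboundary identity for a representation. -/
lemma cobound {H : Type*} [NormedAddCommGroup H] [Module ℝ H]
    (π : G →* (H ≃ₗᵢ[ℝ] H)) (F : H) (g h : G) :
    π (g * h) F - F = π g (π h F - F) + (π g F - F) := by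
  have : π (g * h) F = π g (π h F) := by
    rw [map_mul]; rfl
  rw [this, map_sub]
  abel

/-! ### Helpers: `ℓ²`-direct sums of isometries -/

variable {ι : Type} {H : ι → Type} [∀ i, NormedAddCommGroup (H i)]
  [∀ i, InnerProductSpace ℝ (H i)]

lemma memℓp_congr (e : ∀ i, H i ≃ₗᵢ[ℝ] H i) (f : lp H 2) :
    Memℓp (fun i => e i (f i)) 2 := by
  apply memℓp_gen
  have := (lp.memℓp f).summable (p := 2) (by norm_num)
  simpa using this

/-- Componentwise linear isometry of `lp H 2` induced by a family of isometries. -/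
def lpCongr (e : ∀ i, H i ≃ₗᵢ[ℝ] H i) : lp H 2 ≃ₗᵢ[ℝ] lp H 2 where
  toLinearEquiv :=
    { toFun := fun f => ⟨fun i => e i (f i), memℓp_congr e f⟩
      invFun := fun f => ⟨fun i => (e i).symm (f i), memℓp_congr (fun i => (e i).symm) f⟩
      map_add' := fun f g => Subtype.ext (funext fun i => by
        show e i ((f + g) i) = e i (f i) + e i (g i)
        rw [lp.coeFn_add, Pi.add_apply, map_add])
      map_smul' := fun r f => Subtype.ext (funext fun i => by
        show e i ((r • f) i) = r • e i (f i)
        rw [lp.coeFn_smul, Pi.smul_apply, _root_.map_smul])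
      left_inv := fun f => Subtype.ext (funext fun i => (e i).symm_apply_apply _)
      right_inv := fun f => Subtype.ext (funext fun i => (e i).apply_symm_apply _) }
  norm_map' := fun f => by
    have h2 : 0 < (2 : ℝ≥0∞).toReal := by norm_num
    rw [lp.norm_eq_tsum_rpow h2, lp.norm_eq_tsum_rpow h2]
    congr 1
    apply tsum_congr
    intro i
    congr 1
    exact (e i).norm_map _

@[simp] lemma lpCongr_apply (e : ∀ i, H i ≃ₗᵢ[ℝ] H i) (f : lp H 2) (i : ι) :
    (lpCongr e f : ∀ i, H i) i = e i (f i) := rfl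

/-- Componentwise direct-sum representation on `lp H 2`. -/
def lpRep (π : ∀ i, G →* (H i ≃ₗᵢ[ℝ] H i)) : G →* (lp H 2 ≃ₗᵢ[ℝ] lp H 2) :=
  MonoidHom.mk' (fun g => lpCongr (fun i => π i g)) (fun g h => by
    apply LinearIsometryEquiv.ext
    intro f
    apply Subtype.ext
    apply funext
    intro i
    show (π i (g * h)) (f i) = (π i g) ((π i h) (f i))
    rw [map_mul]; rfl)

@[simp] lemma lpRep_apply (π : ∀ i, G →* (H i ≃ₗᵢ[ℝ] H i)) (g : G) (f : lp H 2) (i : ι) :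
    (lpRep π g f : ∀ i, H i) i = π i g (f i) := rfl

end RelPoincareAux

open RelPoincareAux

/-- A counterexample to the relative Poincaré inequality with constant `C`. -/
structure CEx (G : Type) [Group G] (S : Finset G) (Y : Set G) (C : ℝ) where
  (Q : Type)
  [grp : Group Q]
  [fin : Fintype Q]
  (q : G →* Q)
  (surj : Function.Surjective q)
  (E : Type)
  [na : NormedAddCommGroup E]
  [ip : InnerProductSpace ℝ E]
  [cs : CompleteSpace E]
  (f : Q → E)
  (y : G)
  (hy : y ∈ Y)
  (hlt : C * (∑ g : Q, ∑ s ∈ S, ‖f (g * q s) - f g‖ ^ 2) <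
    ∑ g : Q, ‖f (g * q y) - f g‖ ^ 2)

attribute [instance] CEx.grp CEx.fin CEx.na CEx.ip CEx.cs

namespace CEx

variable {G : Type} [Group G] {S : Finset G} {Y : Set G}
variable (c : ∀ k : ℕ, CEx G S Y ((4 : ℝ) ^ k))

/-- The Hilbert space attached to the `k`-th counterexample. -/
abbrev Hk (k : ℕ) : Type := PiLp 2 (fun _ : (c k).Q => (c k).E)

/-- The representation on the `k`-th Hilbert space. -/
def rep (k : ℕ) : G →* (Hk c k ≃ₗᵢ[ℝ] Hk c k) := shiftRep (c k).E (c k).q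

/-- The function `f` of the `k`-th counterexample as a vector. -/
def F0 (k : ℕ) : Hk c k := WithLp.toLp 2 (c k).f

/-- The right-hand side (gradient) sum of the `k`-th counterexample. -/
def R (k : ℕ) : ℝ := ∑ g : (c k).Q, ∑ s ∈ S, ‖(c k).f (g * (c k).q s) - (c k).f g‖ ^ 2

/-- The normalization factor. -/
def t (k : ℕ) : ℝ := Real.sqrt ((2 : ℝ)⁻¹ ^ k / R c k)

/-- The `k`-th component of the candidate cocycle. -/
def dcomp (k : ℕ) (g : G) : Hk c k := t c k • (rep c k g (F0 c k) - F0 c k)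

lemma norm_rep_sub (k : ℕ) (g : G) :
    ‖rep c k g (F0 c k) - F0 c k‖ ^ 2
      = ∑ x : (c k).Q, ‖(c k).f (x * (c k).q g) - (c k).f x‖ ^ 2 := by
  rw [PiLp.norm_sq_eq_of_L2]
  rfl

lemma R_nonneg (k : ℕ) : 0 ≤ R c k := by
  apply Finset.sum_nonneg
  intro g _
  apply Finset.sum_nonneg
  intro s _
  positivity

lemma t_nonneg (k : ℕ) : 0 ≤ t c k := Real.sqrt_nonneg _

lemma t_sq (k : ℕ) : t c k ^ 2 = (2 : ℝ)⁻¹ ^ k / R c k := by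
  rw [t, Real.sq_sqrt (div_nonneg (by positivity) (R_nonneg c k))]

lemma dcomp_mul (k : ℕ) (g h : G) :
    dcomp c k (g * h) = rep c k g (dcomp c k h) + dcomp c k g := by
  unfold dcomp
  rw [cobound (rep c k) (F0 c k) g h, smul_add, (rep c k g).map_smul]

lemma norm_dcomp_mul_le (k : ℕ) (g h : G) :
    ‖dcomp c k (g * h)‖ ≤ ‖dcomp c k g‖ + ‖dcomp c k h‖ := by
  rw [dcomp_mul]
  refine (norm_add_le _ _).trans ?_
  rw [(rep c k g).norm_map]
  linarith [norm_nonneg (dcomp c k g), norm_nonneg (dcomp c k h)]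

lemma dcomp_one (k : ℕ) : dcomp c k 1 = 0 := by
  unfold dcomp
  rw [map_one]
  show t c k • ((1 : Hk c k ≃ₗᵢ[ℝ] Hk c k) (F0 c k) - F0 c k) = 0
  rw [LinearIsometryEquiv.coe_one, id_eq, sub_self, smul_zero]

lemma norm_dcomp_inv (k : ℕ) (g : G) : ‖dcomp c k g⁻¹‖ = ‖dcomp c k g‖ := by
  have h := dcomp_mul c k g⁻¹ g
  rw [inv_mul_cancel, dcomp_one] at h
  have : dcomp c k g⁻¹ = -(rep c k g⁻¹ (dcomp c k g)) := by
    rw [eq_neg_iff_add_eq_zero]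
    linear_combination (norm := module) -h
  rw [this, norm_neg, (rep c k g⁻¹).norm_map]

variable (hS : Subgroup.closure (S : Set G) = ⊤)

include hS in
lemma R_pos (k : ℕ) : 0 < R c k := by
  rcases (R_nonneg c k).lt_or_eq with h | h
  · exact h
  exfalso
  have hR0 : ∑ g : (c k).Q, ∑ s ∈ S, ‖(c k).f (g * (c k).q s) - (c k).f g‖ ^ 2 = 0 := h.symm
  -- if the gradient vanishes, `f` is constant, contradicting `hlt`
  have hzero : ∀ g : (c k).Q, ∀ s ∈ S, (c k).f (g * (c k).q s) = (c k).f g := by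
    intro g s hs
    have hterm := (Finset.sum_eq_zero_iff_of_nonneg (fun g _ => Finset.sum_nonneg
      (fun s _ => by positivity))).1 hR0 g (Finset.mem_univ g)
    have hterm2 := (Finset.sum_eq_zero_iff_of_nonneg (fun s _ => by positivity)).1 hterm s hs
    have hnorm : ‖(c k).f (g * (c k).q s) - (c k).f g‖ = 0 := by
      nlinarith [norm_nonneg ((c k).f (g * (c k).q s) - (c k).f g)]
    rw [norm_eq_zero, sub_eq_zero] at hnorm
    exact hnorm
  -- the set of `x` with `f (g * x) = f g` for all `g` is a subgroup containing `q '' S`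
  let T : Subgroup (c k).Q :=
    { carrier := {x | ∀ g, (c k).f (g * x) = (c k).f g}
      one_mem' := fun g => by rw [mul_one]
      mul_mem' := by
        rintro a b ha hb g
        rw [← mul_assoc, hb, ha]
      inv_mem' := by
        rintro a ha g
        have := ha (g * a⁻¹)
        rw [mul_assoc, inv_mul_cancel, mul_one] at this
        exact this.symm }
  have h1 : Subgroup.closure ((c k).q '' (S : Set G)) ≤ T := by
    apply (Subgroup.closure_le T).2
    rintro x ⟨s, hs, rfl⟩
    exact fun g => hzero g s hs
  have h2 : Subgroup.closure ((c k).q '' (S : Set G)) = ⊤ := by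
    rw [← MonoidHom.map_closure, hS, Subgroup.map_top_of_surjective (c k).q (c k).surj]
  have hy : ∀ g : (c k).Q, (c k).f (g * (c k).q (c k).y) = (c k).f g := by
    have hyT : (c k).q (c k).y ∈ T := by
      apply SetLike.le_def.1 h1
      rw [h2]
      exact Subgroup.mem_top _
    exact hyT
  have hlt := (c k).hlt
  rw [hR0, mul_zero] at hlt
  have hz : ∑ g : (c k).Q, ‖(c k).f (g * (c k).q (c k).y) - (c k).f g‖ ^ 2 = 0 := by
    apply Finset.sum_eq_zero
    intro g _
    rw [hy g, sub_self, norm_zero]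
    norm_num
  rw [hz] at hlt
  exact lt_irrefl 0 hlt

include hS in
lemma norm_dcomp_gen_le (k : ℕ) {s : G} (hs : s ∈ S) :
    ‖dcomp c k s‖ ≤ Real.sqrt ((2 : ℝ)⁻¹ ^ k) := by
  have hR := R_pos c hS k
  have hsq : ‖dcomp c k s‖ ^ 2 ≤ (2 : ℝ)⁻¹ ^ k := by
    rw [dcomp, norm_smul, mul_pow, Real.norm_eq_abs, sq_abs, t_sq, norm_rep_sub]
    have hle : ∑ x : (c k).Q, ‖(c k).f (x * (c k).q s) - (c k).f x‖ ^ 2 ≤ R c k := by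
      rw [R]
      rw [Finset.sum_comm]
      apply Finset.single_le_sum (f := fun s =>
        ∑ x : (c k).Q, ‖(c k).f (x * (c k).q s) - (c k).f x‖ ^ 2) ?_ hs
      intro i _
      apply Finset.sum_nonneg
      intro x _
      positivity
    calc (2 : ℝ)⁻¹ ^ k / R c k * ∑ x : (c k).Q, ‖(c k).f (x * (c k).q s) - (c k).f x‖ ^ 2
        ≤ (2 : ℝ)⁻¹ ^ k / R c k * R c k :=
          mul_le_mul_of_nonneg_left hle (div_nonneg (by positivity) hR.le)
      _ = (2 : ℝ)⁻¹ ^ k := div_mul_cancel₀ _ (ne_of_gt hR)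
  have := Real.sqrt_le_sqrt hsq
  rwa [Real.sqrt_sq (norm_nonneg _)] at this

include hS in
lemma norm_dcomp_bound (g : G) :
    ∃ L : ℝ, ∀ k, ‖dcomp c k g‖ ≤ L * Real.sqrt ((2 : ℝ)⁻¹ ^ k) := by
  let T : Subgroup G :=
    { carrier := {g | ∃ L : ℝ, ∀ k, ‖dcomp c k g‖ ≤ L * Real.sqrt ((2 : ℝ)⁻¹ ^ k)}
      one_mem' := ⟨0, fun k => by
        rw [dcomp_one, norm_zero, zero_mul]⟩
      mul_mem' := by
        rintro a b ⟨La, hLa⟩ ⟨Lb, hLb⟩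
        refine ⟨La + Lb, fun k => ?_⟩
        refine (norm_dcomp_mul_le c k a b).trans ?_
        rw [add_mul]
        exact add_le_add (hLa k) (hLb k)
      inv_mem' := by
        rintro a ⟨La, hLa⟩
        refine ⟨La, fun k => ?_⟩
        rw [norm_dcomp_inv]
        exact hLa k }
  have h1 : Subgroup.closure (S : Set G) ≤ T := by
    apply (Subgroup.closure_le T).2
    intro s hs
    exact ⟨1, fun k => by rw [one_mul]; exact norm_dcomp_gen_le c hS k hs⟩
  have : g ∈ T := by
    apply SetLike.le_def.1 h1
    rw [hS]
    exact Subgroup.mem_top _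
  exact this

include hS in
lemma memℓp_dcomp (g : G) : Memℓp (fun k => dcomp c k g) 2 := by
  obtain ⟨L, hL⟩ := norm_dcomp_bound c hS g
  apply memℓp_gen
  have h2 : ((2 : ℝ≥0∞)).toReal = 2 := by norm_num
  rw [h2]
  have hsum : Summable (fun k : ℕ => L ^ 2 * (2 : ℝ)⁻¹ ^ k) :=
    (summable_geometric_of_lt_one (by norm_num) (by norm_num)).mul_left _
  apply Summable.of_nonneg_of_le (fun k => by positivity) (fun k => ?_) hsum
  have hk := hL k
  have h0 : (0 : ℝ) ≤ ‖dcomp c k g‖ := norm_nonneg _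
  have hb : ‖dcomp c k g‖ ^ (2 : ℝ) = ‖dcomp c k g‖ ^ (2 : ℕ) := by
    rw [show ((2 : ℝ)) = ((2 : ℕ) : ℝ) by norm_num, Real.rpow_natCast]
  rw [hb]
  calc ‖dcomp c k g‖ ^ (2 : ℕ) ≤ (L * Real.sqrt ((2 : ℝ)⁻¹ ^ k)) ^ (2 : ℕ) := by
        apply pow_le_pow_left₀ h0 hk
    _ = L ^ 2 * (2 : ℝ)⁻¹ ^ k := by
        rw [mul_pow, Real.sq_sqrt (by positivity)]

include hS in
lemma norm_dcomp_y (k : ℕ) : (2 : ℝ) ^ k < ‖dcomp c k ((c k).y)‖ ^ 2 := by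
  have hR := R_pos c hS k
  have hlt := (c k).hlt
  rw [dcomp, norm_smul, mul_pow, Real.norm_eq_abs, sq_abs, t_sq, norm_rep_sub]
  have h1 : (2 : ℝ)⁻¹ ^ k / R c k * ((4 : ℝ) ^ k * R c k) = (2 : ℝ) ^ k := by
    rw [show (4 : ℝ) = 2 * 2 by norm_num, mul_pow, inv_pow]
    field_simp
  calc (2 : ℝ) ^ k = (2 : ℝ)⁻¹ ^ k / R c k * ((4 : ℝ) ^ k * R c k) := h1.symm
    _ < (2 : ℝ)⁻¹ ^ k / R c k
        * ∑ g : (c k).Q, ‖(c k).f (g * (c k).q ((c k).y)) - (c k).f g‖ ^ 2 := by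
        apply mul_lt_mul_of_pos_left _ (by positivity)
        calc (4 : ℝ) ^ k * R c k
            = (4 : ℝ) ^ k * ∑ g : (c k).Q, ∑ s ∈ S, ‖(c k).f (g * (c k).q s) - (c k).f g‖ ^ 2 :=
              rfl
          _ < _ := hlt

end CEx

open CEx in
set_option synthInstance.maxHeartbeats 1000000 in
set_option maxHeartbeats 1000000 in
/-- From a full family of counterexamples we contradict relative property (T). -/
theorem no_cex {G : Type} [Group G] {S : Finset G} (hS : Subgroup.closure (S : Set G) = ⊤)
    {Y : Set G} (hT : RelPropT G Y) (c : ∀ k : ℕ, CEx G S Y ((4 : ℝ) ^ k)) : False := by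
  let A : AffIsomAction G :=
    { H := lp (fun k => Hk c k) 2
      π := lpRep (fun k => rep c k)
      b := fun g => ⟨fun k => dcomp c k g, memℓp_dcomp c hS g⟩
      cocycle := fun g h => by
        apply Subtype.ext
        apply funext
        intro k
        exact dcomp_mul c k g h }
  obtain ⟨M, hM⟩ := hT A 0
  obtain ⟨k, hk⟩ := pow_unbounded_of_one_lt (M ^ 2) (one_lt_two (α := ℝ))
  have hb : ‖A.b ((c k).y)‖ ≤ M := by
    have := hM ((c k).y) ((c k).hy)
    rwa [map_zero, zero_add] at this
  have hcomp : ‖dcomp c k ((c k).y)‖ ≤ ‖A.b ((c k).y)‖ := by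
    have h := lp.norm_apply_le_norm (by norm_num : (2 : ℝ≥0∞) ≠ 0) (A.b ((c k).y)) k
    exact h
  have h1 : ‖dcomp c k ((c k).y)‖ ^ 2 ≤ M ^ 2 := by
    have h0 : (0 : ℝ) ≤ ‖dcomp c k ((c k).y)‖ := norm_nonneg _
    have := hcomp.trans hb
    nlinarith
  have h2 := norm_dcomp_y c hS k
  linarith

/-- If `G` is generated by the finite set `S` and `(G,Y)` has relative
Property (T) for an infinite subset `Y ⊆ G`, then there is `C > 0` such that every function
from a finite quotient of `G` to a Hilbert space satisfies the relative Poincaré inequality. -/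
theorem relative_poincare_of_relPropT
    (G : Type) [Group G] (S : Finset G) (hS : Subgroup.closure (S : Set G) = ⊤)
    (Y : Set G) (hY : Y.Infinite) (hT : RelPropT G Y) :
    ∃ C : ℝ, 0 < C ∧
      ∀ (Q : Type) [Group Q] [Fintype Q], ∀ (q : G →* Q), Function.Surjective q →
      ∀ (E : Type) [NormedAddCommGroup E] [InnerProductSpace ℝ E] [CompleteSpace E],
      ∀ (f : Q → E), ∀ y ∈ Y,
        ∑ g : Q, ‖f (g * q y) - f g‖ ^ 2 ≤
          C * ∑ g : Q, ∑ s ∈ S, ‖f (g * q s) - f g‖ ^ 2 := by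
  by_contra hC
  push_neg at hC
  have hk : ∀ k : ℕ, Nonempty (CEx G S Y ((4 : ℝ) ^ k)) := by
    intro k
    obtain ⟨Q, _, _, q, hq, E, _, _, hcs, f, y, hy, hlt⟩ := hC ((4 : ℝ) ^ k) (by positivity)
    exact ⟨⟨Q, q, hq, E, f, y, hy, hlt⟩⟩
  exact absurd (no_cex hS hT (fun k => (hk k).some)) not_false

end
end

section
/- Let θ : [0,∞) → [0,∞) be a proper function, and let (A_n, d_n) be a sequence of abelian groups equipped with invariant metrics d_n such that for every r, every ball of radius r in every A_n has cardinality at most θ(r). Then the sequence (A_n, d_n) is uniformly amenable: for all ε > 0 and r > 0, there exists D > 0 such that for every n there is a subset F_n ⊆ A_n of diameter ≤ D with |gF_n △ F_n| ≤ ε|F_n| for every g ∈ A_n with d_n(e,g) ≤ r. -/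
open MeasureTheory Filter Set

noncomputable section

/-- A sequence of abelian groups with invariant metrics whose balls of
radius `r` have cardinality at most `θ(r)`, for a fixed proper function `θ`, is uniformly
amenable: for all `ε, r > 0` there is `D > 0` such that every `A n` contains a subset `F` of
diameter `≤ D` with `|gF ∆ F| ≤ ε|F|` for every `g` with `d_n(e,g) ≤ r`. -/
theorem uniformly_amenable_of_uniform_ball_bound
    (θ : ℝ → ℝ) (hθ : ProperFun θ)
    (A : ℕ → Type) [∀ n, CommGroup (A n)] (d : ∀ n, A n → A n → ℝ)
    (hsymm : ∀ n (x y : A n), d n x y = d n y x)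
    (hzero : ∀ n (x : A n), d n x x = 0)
    (hpos : ∀ n (x y : A n), x ≠ y → 0 < d n x y)
    (htri : ∀ n (x y z : A n), d n x z ≤ d n x y + d n y z)
    (hinv : ∀ n (g x y : A n), d n (g * x) (g * y) = d n x y)
    (hballfin : ∀ n (r : ℝ), ({x : A n | d n 1 x ≤ r}).Finite)
    (hball : ∀ n (r : ℝ), (({x : A n | d n 1 x ≤ r}).ncard : ℝ) ≤ θ r) :
    ∀ ε > (0 : ℝ), ∀ r > (0 : ℝ), ∃ D > (0 : ℝ), ∀ n, ∃ F : Set (A n),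
      F.Finite ∧ F.Nonempty ∧ (∀ x ∈ F, ∀ y ∈ F, d n x y ≤ D) ∧
      ∀ g : A n, d n 1 g ≤ r →
        ((symmDiff ((fun x => g * x) '' F) F).ncard : ℝ) ≤ ε * F.ncard := by
  classical
  intro ε hε r hr
  set M : ℕ := max 1 ⌈θ r⌉₊ with hMdef
  have hM1 : 1 ≤ M := le_max_left _ _
  have hM0 : (0:ℝ) < M := by exact_mod_cast hM1
  -- choose K with (2K+1)^M < (1+ε)^K
  obtain ⟨K, hK1, hKlt⟩ : ∃ K : ℕ, 1 ≤ K ∧ ((2*K+1 : ℕ) : ℝ) ^ M < (1+ε)^K := by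
    have h3 : (0:ℝ) < ((3:ℝ)^M)⁻¹ := by positivity
    have ht := tendsto_pow_const_div_const_pow_of_one_lt M (show (1:ℝ) < 1+ε by linarith)
    have hev : ∀ᶠ K : ℕ in atTop, (K:ℝ)^M / (1+ε)^K < ((3:ℝ)^M)⁻¹ := by
      have := ht.eventually (eventually_lt_nhds h3)
      simpa using this
    obtain ⟨N, hN⟩ := eventually_atTop.1 hev
    refine ⟨max N 1, le_max_right _ _, ?_⟩
    set K := max N 1 with hKdef
    have hKN : N ≤ K := le_max_left _ _
    have hK1' : 1 ≤ K := le_max_right _ _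
    have h := hN K hKN
    have hpow : (0:ℝ) < (1+ε)^K := by positivity
    have h2 : (3:ℝ)^M * (K:ℝ)^M < (1+ε)^K := by
      rw [div_lt_iff₀ hpow] at h
      calc (3:ℝ)^M * (K:ℝ)^M = (K:ℝ)^M * (3:ℝ)^M := by ring
        _ < (((3:ℝ)^M)⁻¹ * (1+ε)^K) * (3:ℝ)^M := by
            apply mul_lt_mul_of_pos_right h (by positivity)
        _ = (1+ε)^K := by field_simp
    have h4 : ((2*K+1 : ℕ) : ℝ) ^ M ≤ (3:ℝ)^M * (K:ℝ)^M := by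
      rw [← mul_pow]
      apply pow_le_pow_left₀ (by positivity)
      push_cast
      have : (1:ℝ) ≤ K := by exact_mod_cast hK1'
      linarith
    linarith
  have hK0 : (0:ℝ) < K := by exact_mod_cast hK1
  refine ⟨4 * (M:ℝ) * K * r, by positivity, ?_⟩
  intro n
  set S : Set (A n) := {x | d n 1 x ≤ r} with hSdef
  have hSfin : S.Finite := hballfin n r
  set T : Finset (A n) := hSfin.toFinset with hTdef
  have hmemT : ∀ x, x ∈ T ↔ d n 1 x ≤ r := fun x => by
    simp [hTdef, hSdef, Set.Finite.mem_toFinset]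
  have hTM : T.card ≤ M := by
    have h1 : (T.card : ℝ) ≤ θ r := by
      have := hball n r
      rwa [Set.ncard_eq_toFinset_card _ hSfin] at this
    have h2 : (T.card : ℝ) ≤ (⌈θ r⌉₊ : ℝ) := h1.trans (Nat.le_ceil _)
    have h3 : T.card ≤ ⌈θ r⌉₊ := by exact_mod_cast h2
    exact h3.trans (le_max_right _ _)
  -- the box sets
  set Fset : ℕ → Set (A n) :=
    fun k => (fun f : A n → ℕ => ∏ s ∈ T, s ^ f s) '' {f | ∀ s, f s ≤ k} with hFdef
  have hmono : ∀ j k : ℕ, j ≤ k → Fset j ⊆ Fset k := by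
    intro j k hjk
    exact Set.image_mono (fun f hf s => (hf s).trans hjk)
  -- cardinality bounds
  have hfin : ∀ k, (Fset k).Finite := by
    intro k
    apply Set.Finite.subset (Set.finite_range
      (fun f : (↥T → Fin (k+1)) => ∏ s ∈ T.attach, (s : A n) ^ ((f s : ℕ))))
    rintro x ⟨f, hf, rfl⟩
    exact ⟨fun s => ⟨f s, Nat.lt_succ_of_le (hf s)⟩, by
      simpa using Finset.prod_attach T (fun s => s ^ f s)⟩
  have hcard : ∀ k, ((Fset k).ncard : ℝ) ≤ ((k+1 : ℕ) : ℝ) ^ M := by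
    intro k
    set ψ : (↥T → Fin (k+1)) → A n :=
      fun f => ∏ s ∈ T.attach, (s : A n) ^ ((f s : ℕ)) with hψ
    have hsub : Fset k ⊆ Set.range ψ := by
      rintro x ⟨f, hf, rfl⟩
      exact ⟨fun s => ⟨f s, Nat.lt_succ_of_le (hf s)⟩, by
        simpa [hψ] using Finset.prod_attach T (fun s => s ^ f s)⟩
    have h1 : (Fset k).ncard ≤ (Set.range ψ).ncard :=
      Set.ncard_le_ncard hsub (Set.finite_range ψ)
    have h2 : (Set.range ψ).ncard ≤ (k+1) ^ T.card := by
      rw [← Set.image_univ]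
      calc (ψ '' Set.univ).ncard ≤ (Set.univ : Set (↥T → Fin (k+1))).ncard :=
            Set.ncard_image_le Set.finite_univ
        _ = Nat.card (↥T → Fin (k+1)) := Set.ncard_univ _
        _ = (k+1) ^ T.card := by
            rw [Nat.card_eq_fintype_card, Fintype.card_fun]
            simp [Fintype.card_coe]
    have h3 : (k+1) ^ T.card ≤ (k+1) ^ M := Nat.pow_le_pow_right (by omega) hTM
    calc ((Fset k).ncard : ℝ) ≤ (((k+1)^M : ℕ) : ℝ) := by exact_mod_cast h1.trans (h2.trans h3)
      _ = ((k+1 : ℕ) : ℝ) ^ M := by push_cast; ring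
  have hone : (Fset 0).ncard = 1 := by
    have : Fset 0 = {1} := by
      ext x
      constructor
      · rintro ⟨f, hf, rfl⟩
        have hp : ∏ s ∈ T, s ^ f s = 1 :=
          Finset.prod_eq_one (fun s _ => by rw [Nat.le_zero.mp (hf s), pow_zero])
        simp [hp]
      · rintro rfl
        exact ⟨fun _ => 0, fun s => le_rfl, by simp⟩
    rw [this, Set.ncard_singleton]
  have honemem : ∀ k, (1 : A n) ∈ Fset k :=
    fun k => ⟨fun _ => 0, fun s => Nat.zero_le _, by simp⟩
  -- norm bounds
  have hd1g : ∀ a b : A n, d n 1 (a * b) ≤ d n 1 a + d n 1 b := by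
    intro a b
    have h2 : d n a (a*b) = d n 1 b := by simpa using hinv n a 1 b
    calc d n 1 (a*b) ≤ d n 1 a + d n a (a*b) := htri n 1 a (a*b)
      _ = d n 1 a + d n 1 b := by rw [h2]
  have hdpow : ∀ s : A n, d n 1 s ≤ r → ∀ j : ℕ, d n 1 (s ^ j) ≤ j * r := by
    intro s hs j
    induction j with
    | zero => simp [hzero n 1]
    | succ j ih =>
      rw [pow_succ]
      calc d n 1 (s^j * s) ≤ d n 1 (s^j) + d n 1 s := hd1g _ _
        _ ≤ j * r + r := add_le_add ih hs
        _ = ((j+1 : ℕ) : ℝ) * r := by push_cast; ring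
  have hdprodgen : ∀ T' : Finset (A n), (∀ s ∈ T', d n 1 s ≤ r) →
      ∀ (f : A n → ℕ) (k : ℕ), (∀ s, f s ≤ k) →
      d n 1 (∏ s ∈ T', s ^ f s) ≤ (T'.card : ℝ) * k * r := by
    intro T'
    induction T' using Finset.induction_on with
    | empty =>
      intro _ f k _
      simp [hzero n 1]
    | @insert a s' ha ih =>
      intro hs f k hf
      rw [Finset.prod_insert ha, Finset.card_insert_of_notMem ha]
      have h1 : d n 1 (a ^ f a) ≤ (k : ℝ) * r := by
        calc d n 1 (a ^ f a) ≤ (f a : ℝ) * r := hdpow a (hs a (Finset.mem_insert_self a s')) (f a)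
          _ ≤ (k : ℝ) * r := by
              apply mul_le_mul_of_nonneg_right _ hr.le
              exact_mod_cast hf a
      have h2 := ih (fun s hs' => hs s (Finset.mem_insert_of_mem hs')) f k hf
      calc d n 1 (a ^ f a * ∏ s ∈ s', s ^ f s)
          ≤ d n 1 (a ^ f a) + d n 1 (∏ s ∈ s', s ^ f s) := hd1g _ _
        _ ≤ (k:ℝ)*r + (s'.card : ℝ) * k * r := add_le_add h1 h2
        _ = ((s'.card + 1 : ℕ) : ℝ) * k * r := by push_cast; ring
  have hFd : ∀ (k : ℕ), ∀ x ∈ Fset k, d n 1 x ≤ (M:ℝ) * k * r := by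
    rintro k x ⟨f, hf, rfl⟩
    calc d n 1 (∏ s ∈ T, s ^ f s) ≤ (T.card : ℝ) * k * r :=
          hdprodgen T (fun s hs => (hmemT s).1 hs) f k hf
      _ ≤ (M:ℝ) * k * r := by
          apply mul_le_mul_of_nonneg_right _ hr.le
          apply mul_le_mul_of_nonneg_right _ (by positivity)
          exact_mod_cast hTM
  -- translation
  have hgmul : ∀ g ∈ T, ∀ f : A n → ℕ,
      g * ∏ s ∈ T, s ^ f s = ∏ s ∈ T, s ^ (if s = g then f s + 1 else f s) := by
    intro g hg f
    rw [← Finset.mul_prod_erase T (fun s => s ^ (if s = g then f s + 1 else f s)) hg,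
        ← Finset.mul_prod_erase T (fun s => s ^ f s) hg]
    have h1 : ∏ x ∈ T.erase g, x ^ (if x = g then f x + 1 else f x)
        = ∏ x ∈ T.erase g, x ^ f x :=
      Finset.prod_congr rfl (fun x hx => by rw [if_neg (Finset.ne_of_mem_erase hx)])
    rw [h1, if_pos rfl, pow_succ]
    rw [mul_comm (g ^ f g) g, mul_assoc]
  have hsubset1 : ∀ g ∈ T, ∀ k, (fun x => g * x) '' Fset k ⊆ Fset (k+1) := by
    rintro g hg k x ⟨y, ⟨f, hf, rfl⟩, rfl⟩
    refine ⟨fun s => if s = g then f s + 1 else f s, fun s => ?_, (hgmul g hg f).symm⟩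
    have h1 := hf s
    have h2 := hf g
    by_cases hsg : s = g <;> simp [hsg] <;> omega
  have hginvT : ∀ g ∈ T, g⁻¹ ∈ T := by
    intro g hg
    rw [hmemT] at hg ⊢
    have h1 : d n (g * 1) (g * g⁻¹) = d n 1 g⁻¹ := hinv n g 1 g⁻¹
    simp only [mul_one, mul_inv_cancel] at h1
    rw [← h1, hsymm]
    exact hg
  have hsubset2 : ∀ g ∈ T, ∀ k, Fset k ⊆ (fun x => g * x) '' Fset (k+1) := by
    rintro g hg k x ⟨f, hf, rfl⟩
    have hgi := hginvT g hg
    refine ⟨g⁻¹ * ∏ s ∈ T, s ^ f s, ?_, by simp⟩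
    rw [hgmul g⁻¹ hgi f]
    refine ⟨fun s => if s = g⁻¹ then f s + 1 else f s, fun s => ?_, rfl⟩
    have h1 := hf s
    have h2 := hf g⁻¹
    by_cases hsg : s = g⁻¹ <;> simp [hsg] <;> omega
  -- pigeonhole
  obtain ⟨j, hjK, hjle⟩ : ∃ j, j < K ∧
      ((Fset (2*j+2)).ncard : ℝ) ≤ (1+ε) * ((Fset (2*j)).ncard : ℝ) := by
    by_contra hcon
    push_neg at hcon
    have hrec : ∀ j ≤ K, (1+ε)^j ≤ ((Fset (2*j)).ncard : ℝ) := by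
      intro j
      induction j with
      | zero => intro _; simp [hone]
      | succ j ih =>
        intro hj
        have h1 := ih (Nat.le_of_succ_le hj)
        have h2 := hcon j (by omega)
        have h3 : (1+ε) * (1+ε)^j ≤ (1+ε) * ((Fset (2*j)).ncard : ℝ) :=
          mul_le_mul_of_nonneg_left h1 (by linarith)
        have h4 : 2*(j+1) = 2*j+2 := by ring
        rw [h4, pow_succ]
        calc (1+ε)^j * (1+ε) = (1+ε) * (1+ε)^j := by ring
          _ ≤ (1+ε) * ((Fset (2*j)).ncard : ℝ) := h3
          _ ≤ ((Fset (2*j+2)).ncard : ℝ) := (h2).le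
    have hKK := hrec K le_rfl
    have hcK := hcard (2*K)
    have : ((2*K+1 : ℕ) : ℝ)^M = ((2*K+1 : ℕ) : ℝ)^M := rfl
    have heq : ((2*K+1 : ℕ) : ℝ) = ((2*K+1 : ℕ) : ℝ) := rfl
    have : (2*K+1 : ℕ) = (2*K)+1 := by ring
    rw [this] at hKlt
    linarith
  refine ⟨Fset (2*j+1), hfin _, ⟨1, honemem _⟩, ?_, ?_⟩
  · intro x hx y hy
    have hdx := hFd _ x hx
    have hdy := hFd _ y hy
    have hb : ((2*j+1 : ℕ) : ℝ) ≤ 2*K := by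
      have : (2*j+1 : ℕ) ≤ 2*K := by omega
      exact_mod_cast this
    have h1 : (M:ℝ) * ((2*j+1 : ℕ) : ℝ) * r ≤ (M:ℝ) * (2*K) * r := by
      apply mul_le_mul_of_nonneg_right _ hr.le
      exact mul_le_mul_of_nonneg_left hb hM0.le
    calc d n x y ≤ d n x 1 + d n 1 y := htri n x 1 y
      _ = d n 1 x + d n 1 y := by rw [hsymm n x 1]
      _ ≤ (M:ℝ) * (2*K) * r + (M:ℝ) * (2*K) * r := add_le_add (hdx.trans h1) (hdy.trans h1)
      _ = 4 * (M:ℝ) * K * r := by ring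
  · intro g hgball
    have hgT : g ∈ T := (hmemT g).2 hgball
    have hsub : symmDiff ((fun x => g*x) '' Fset (2*j+1)) (Fset (2*j+1))
        ⊆ Fset (2*j+2) \ Fset (2*j) := by
      intro x hx
      rw [Set.mem_symmDiff] at hx
      rcases hx with ⟨hx1, hx2⟩ | ⟨hx1, hx2⟩
      · refine ⟨hsubset1 g hgT (2*j+1) hx1, fun hmem => hx2 (hmono _ _ (by omega) hmem)⟩
      · refine ⟨hmono _ _ (by omega) hx1, fun hmem => ?_⟩
        have : (2*j) + 1 = 2*j+1 := rfl
        exact hx2 (hsubset2 g hgT (2*j) hmem)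
    have hfd : (Fset (2*j+2) \ Fset (2*j)).Finite := (hfin _).diff
    have h1 : (symmDiff ((fun x => g*x) '' Fset (2*j+1)) (Fset (2*j+1))).ncard
        ≤ (Fset (2*j+2) \ Fset (2*j)).ncard := Set.ncard_le_ncard hsub hfd
    have h2 : (Fset (2*j+2) \ Fset (2*j)).ncard
        = (Fset (2*j+2)).ncard - (Fset (2*j)).ncard :=
      Set.ncard_diff (hmono _ _ (by omega)) (hfin _)
    have h3 : (Fset (2*j)).ncard ≤ (Fset (2*j+2)).ncard :=
      Set.ncard_le_ncard (hmono _ _ (by omega)) (hfin _)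
    have h4 : (Fset (2*j)).ncard ≤ (Fset (2*j+1)).ncard :=
      Set.ncard_le_ncard (hmono _ _ (by omega)) (hfin _)
    have h5 : ((Fset (2*j+2) \ Fset (2*j)).ncard : ℝ)
        = ((Fset (2*j+2)).ncard : ℝ) - ((Fset (2*j)).ncard : ℝ) := by
      rw [h2, Nat.cast_sub h3]
    have h6 : ((Fset (2*j)).ncard : ℝ) ≤ ((Fset (2*j+1)).ncard : ℝ) := by exact_mod_cast h4
    have h7 : ((symmDiff ((fun x => g*x) '' Fset (2*j+1)) (Fset (2*j+1))).ncard : ℝ)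
        ≤ ((Fset (2*j+2) \ Fset (2*j)).ncard : ℝ) := by exact_mod_cast h1
    have h8 : (0:ℝ) ≤ ((Fset (2*j)).ncard : ℝ) := Nat.cast_nonneg _
    nlinarith [h7, h5, hjle, h6]

end
end

section
/- Let G be a discrete countable group, Y ⊆ G an infinite subset such that the pair (G,Y) has relative Property T, and let S be a finite generating subset of G. Then there exists a constant C > 0 such that for every affine isometric action (H, π, b) of G on a Hilbert space, one has ‖b(y)‖² ≤ C · Σ_{s∈S} ‖b(s)‖² for all y ∈ Y. -/
open MeasureTheory Filter Set

noncomputable section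


namespace AffIsomAction

variable {G : Type} [Group G]

theorem b_one (A : AffIsomAction G) : A.b 1 = 0 := by
  have h := A.cocycle 1 1
  rw [one_mul, map_one] at h
  simp only [LinearIsometryEquiv.coe_one, id_eq] at h
  exact left_eq_add.mp h

theorem b_one' (A : AffIsomAction G) : A.b 1 = 0 := A.b_one

theorem b_inv (A : AffIsomAction G) (g : G) : A.b g⁻¹ = -(A.π g⁻¹ (A.b g)) := by
  have h := A.cocycle g⁻¹ g
  rw [inv_mul_cancel, A.b_one] at h
  exact eq_neg_of_add_eq_zero_right h.symm

@[simp] theorem norm_b_inv (A : AffIsomAction G) (g : G) : ‖A.b g⁻¹‖ = ‖A.b g‖ := by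
  rw [A.b_inv, norm_neg, LinearIsometryEquiv.norm_map]

/-- Scaling a cocycle by a real number. -/
def smulAct (t : ℝ) (A : AffIsomAction G) : AffIsomAction G :=
  { A with
    b := fun g => t • A.b g
    cocycle := fun g h => by
      show t • A.b (g * h) = A.π g (t • A.b h) + t • A.b g
      rw [A.cocycle, smul_add, LinearIsometryEquiv.map_smul] }

@[simp] theorem smulAct_b (t : ℝ) (A : AffIsomAction G) (g : G) :
    (smulAct t A).b g = t • A.b g := rfl

theorem b_eq_zero (A : AffIsomAction G) (S : Set G) (hS : Subgroup.closure S = ⊤)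
    (h : ∀ s ∈ S, A.b s = 0) (g : G) : A.b g = 0 := by
  have hg : g ∈ Subgroup.closure S := by rw [hS]; trivial
  induction hg using Subgroup.closure_induction with
  | mem x hx => exact h x hx
  | one => exact A.b_one
  | mul x y hx hy px py => rw [A.cocycle, px, py]; simp
  | inv x hx px => rw [A.b_inv, px]; simp

end AffIsomAction

section DirectSum

variable {G : Type} [Group G] (B : ℕ → AffIsomAction G)

theorem memℓp_map (e : ∀ n, (B n).H ≃ₗᵢ[ℝ] (B n).H) (f : lp (fun n => (B n).H) 2) :
    Memℓp (fun n => e n (f n)) 2 := by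
  apply memℓp_gen
  have h := (lp.memℓp f).summable (p := 2) (by norm_num)
  simpa using h

/-- Componentwise linear isometric equivalence on an `ℓ²`-direct sum. -/
def lpCongr (e : ∀ n, (B n).H ≃ₗᵢ[ℝ] (B n).H) :
    lp (fun n => (B n).H) 2 ≃ₗᵢ[ℝ] lp (fun n => (B n).H) 2 :=
  { toFun := fun f => ⟨fun n => e n (f n), memℓp_map B e f⟩
    invFun := fun f => ⟨fun n => (e n).symm (f n), memℓp_map B (fun n => (e n).symm) f⟩
    left_inv := fun f => by ext n; simp
    right_inv := fun f => by ext n; simp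
    map_add' := fun f g => by ext n; simp; rfl
    map_smul' := fun c f => by ext n; simp
    norm_map' := fun f => by
      have h2 : (0:ℝ) < (2:ENNReal).toReal := by norm_num
      rw [lp.norm_eq_tsum_rpow h2, lp.norm_eq_tsum_rpow h2]
      congr 1
      apply tsum_congr
      intro n
      congr 1
      exact LinearIsometryEquiv.norm_map (e n) (f n) }

@[simp] theorem lpCongr_apply (e : ∀ n, (B n).H ≃ₗᵢ[ℝ] (B n).H)
    (f : lp (fun n => (B n).H) 2) (n : ℕ) : (lpCongr B e f) n = e n (f n) := rfl

/-- The componentwise representation on the direct sum. -/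
def dπ : G →* (lp (fun n => (B n).H) 2 ≃ₗᵢ[ℝ] lp (fun n => (B n).H) 2) where
  toFun g := lpCongr B (fun n => (B n).π g)
  map_one' := by
    apply LinearIsometryEquiv.ext
    intro f
    ext n
    simp
  map_mul' g h := by
    apply LinearIsometryEquiv.ext
    intro f
    ext n
    simp [LinearIsometryEquiv.coe_mul]

/-- The cocycle of the direct sum. -/
def db (hB : ∀ g : G, Summable fun n => ‖(B n).b g‖ ^ 2) (g : G) :
    lp (fun n => (B n).H) 2 :=
  ⟨fun n => (B n).b g, memℓp_gen (by simpa using hB g)⟩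

/-- The direct sum of a summable sequence of affine isometric actions. -/
def directSum (hB : ∀ g : G, Summable fun n => ‖(B n).b g‖ ^ 2) : AffIsomAction G where
  H := lp (fun n => (B n).H) 2
  π := dπ B
  b := db B hB
  cocycle g h := by
    ext n
    simp only [lp.coeFn_add, Pi.add_apply]
    change (B n).b (g * h) = (lpCongr B (fun n => (B n).π g)) _ n + (B n).b g
    rw [lpCongr_apply]
    exact (B n).cocycle g h

theorem norm_b_le_directSum (hB : ∀ g : G, Summable fun n => ‖(B n).b g‖ ^ 2) (g : G) (n : ℕ) :
    ‖(B n).b g‖ ≤ ‖(directSum B hB).b g‖ :=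
  lp.norm_apply_le_norm (by norm_num) (db B hB g) n

end DirectSum

/-- If `(G,Y)` has relative Property (T) for an infinite subset `Y` of the
discrete countable group `G`, and `S` is a finite generating set of `G`, then there is `C > 0`
such that every affine isometric action `(H,π,b)` of `G` on a Hilbert space satisfies
`‖b(y)‖² ≤ C ∑_{s ∈ S} ‖b(s)‖²` for all `y ∈ Y`. -/
theorem cocycle_bound_of_relPropT
    (G : Type) [Group G] [Countable G]
    (Y : Set G) (hY : Y.Infinite) (hT : RelPropT G Y)
    (S : Finset G) (hS : Subgroup.closure (S : Set G) = ⊤) :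
    ∃ C : ℝ, 0 < C ∧ ∀ A : AffIsomAction G, ∀ y ∈ Y,
      ‖A.b y‖ ^ 2 ≤ C * ∑ s ∈ S, ‖A.b s‖ ^ 2 := by
  by_contra hC
  push_neg at hC
  have key : ∀ n : ℕ, ∃ A : AffIsomAction G, ∃ y ∈ Y,
      ((n:ℝ)+1)^2 * 2^n * ∑ s ∈ S, ‖A.b s‖^2 < ‖A.b y‖^2 := by
    intro n
    obtain ⟨A, y, hy, hlt⟩ := hC (((n:ℝ)+1)^2 * 2^n) (by positivity)
    exact ⟨A, y, hy, hlt⟩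
  choose A₀ y₀ hy₀ hlt using key
  -- the sum over S is positive for each n
  have hSnn : ∀ n, (0:ℝ) ≤ ∑ s ∈ S, ‖(A₀ n).b s‖^2 :=
    fun n => Finset.sum_nonneg fun s _ => sq_nonneg _
  have hSpos : ∀ n, (0:ℝ) < ∑ s ∈ S, ‖(A₀ n).b s‖^2 := by
    intro n
    rcases (hSnn n).lt_or_eq with h | h
    · exact h
    · exfalso
      have hz : ∀ s ∈ (S : Set G), (A₀ n).b s = 0 := by
        intro s hs
        have hs' : s ∈ S := hs
        have := (Finset.sum_eq_zero_iff_of_nonneg (fun s _ => sq_nonneg ‖(A₀ n).b s‖)).1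
          h.symm s hs'
        have hn : ‖(A₀ n).b s‖ = 0 := by
          nlinarith [norm_nonneg ((A₀ n).b s)]
        exact norm_eq_zero.1 hn
      have hby := (A₀ n).b_eq_zero (S : Set G) hS hz (y₀ n)
      have := hlt n
      rw [hby, ← h] at this
      simp at this
  -- rescale each action
  set t : ℕ → ℝ := fun n => (Real.sqrt ((∑ s ∈ S, ‖(A₀ n).b s‖^2) * 2^n))⁻¹ with htdef
  have htpos : ∀ n, 0 < t n := by
    intro n
    have := hSpos n
    apply inv_pos.2
    apply Real.sqrt_pos.2
    positivity
  have htsq : ∀ n, (t n)^2 = ((∑ s ∈ S, ‖(A₀ n).b s‖^2) * 2^n)⁻¹ := by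
    intro n
    have hpos := hSpos n
    have ht : t n = (Real.sqrt ((∑ s ∈ S, ‖(A₀ n).b s‖ ^ 2) * 2 ^ n))⁻¹ := rfl
    rw [ht, ← Real.sqrt_inv]
    exact Real.sq_sqrt (by positivity)
  set B : ℕ → AffIsomAction G := fun n => AffIsomAction.smulAct (t n) (A₀ n) with hBdef
  have hBnorm : ∀ n g, ‖(B n).b g‖^2 = (t n)^2 * ‖(A₀ n).b g‖^2 := by
    intro n g
    rw [hBdef]
    simp only [AffIsomAction.smulAct_b, norm_smul, Real.norm_eq_abs, mul_pow, sq_abs]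
    show ‖(t n • (A₀ n).b g : (A₀ n).H)‖ ^ 2 = _
    rw [norm_smul, Real.norm_eq_abs, mul_pow, sq_abs]
  have hsum_s : ∀ n, ∑ s ∈ S, ‖(B n).b s‖^2 = ((2:ℝ)⁻¹)^n := by
    intro n
    have : ∑ s ∈ S, ‖(B n).b s‖^2 = (t n)^2 * ∑ s ∈ S, ‖(A₀ n).b s‖^2 := by
      rw [Finset.mul_sum]
      exact Finset.sum_congr rfl fun s _ => hBnorm n s
    have hne : ((∑ s ∈ S, ‖(A₀ n).b s‖ ^ 2) * 2 ^ n) ≠ 0 := by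
      have := hSpos n; positivity
    rw [this, htsq n]
    field_simp
    rw [div_self (ne_of_gt (hSpos n)), ← mul_pow]
    norm_num
  have hy_big : ∀ n : ℕ, ((n:ℝ)+1) < ‖(B n).b (y₀ n)‖ := by
    intro n
    have h1 : ((n:ℝ)+1)^2 < ‖(B n).b (y₀ n)‖^2 := by
      rw [hBnorm n (y₀ n), htsq n]
      have h2 := hlt n
      have h3 : (0:ℝ) < ((∑ s ∈ S, ‖(A₀ n).b s‖^2) * 2^n) := by
        have := hSpos n; positivity
      rw [inv_mul_eq_div, lt_div_iff₀ h3]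
      calc ((n:ℝ)+1)^2 * ((∑ s ∈ S, ‖(A₀ n).b s‖^2) * 2^n)
          = ((n:ℝ)+1)^2 * 2^n * ∑ s ∈ S, ‖(A₀ n).b s‖^2 := by ring
        _ < ‖(A₀ n).b (y₀ n)‖^2 := h2
    exact lt_of_pow_lt_pow_left₀ 2 (norm_nonneg _) h1
  -- summability of the squares of the cocycles
  have hsummable : ∀ g : G, Summable fun n => ‖(B n).b g‖ ^ 2 := by
    intro g
    have hg : g ∈ Subgroup.closure (S : Set G) := by rw [hS]; trivial
    induction hg using Subgroup.closure_induction with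
    | mem x hx =>
      apply Summable.of_nonneg_of_le (fun n => sq_nonneg _) (fun n => ?_)
        (summable_geometric_of_lt_one (by norm_num) (by norm_num : (2:ℝ)⁻¹ < 1))
      calc ‖(B n).b x‖^2 ≤ ∑ s ∈ S, ‖(B n).b s‖^2 :=
            Finset.single_le_sum (fun s _ => sq_nonneg ‖(B n).b s‖) hx
        _ = ((2:ℝ)⁻¹)^n := hsum_s n
    | one =>
      simp only [AffIsomAction.b_one, norm_zero]
      simpa using summable_zero
    | mul x y hx hy px py =>
      apply Summable.of_nonneg_of_le (fun n => sq_nonneg _) (fun n => ?_)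
        ((py.mul_left 2).add (px.mul_left 2))
      have h1 : ‖(B n).b (x*y)‖ ≤ ‖(B n).b y‖ + ‖(B n).b x‖ := by
        rw [(B n).cocycle]
        refine (norm_add_le _ _).trans ?_
        rw [LinearIsometryEquiv.norm_map]
      nlinarith [norm_nonneg ((B n).b (x*y)), norm_nonneg ((B n).b x), norm_nonneg ((B n).b y),
        sq_nonneg (‖(B n).b y‖ - ‖(B n).b x‖), sq_nonneg (‖(B n).b y‖ + ‖(B n).b x‖)]
    | inv x hx px =>
      simpa only [AffIsomAction.norm_b_inv] using px
  -- direct-sum action and relative property (T)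
  obtain ⟨M, hM⟩ := hT (directSum B hsummable) 0
  set n := ⌈M⌉₊ with hn
  have h1 : ‖(directSum B hsummable).b (y₀ n)‖ ≤ M := by
    have := hM (y₀ n) (hy₀ n)
    rwa [map_zero, zero_add] at this
  have h2 : ‖(B n).b (y₀ n)‖ ≤ ‖(directSum B hsummable).b (y₀ n)‖ :=
    norm_b_le_directSum B hsummable (y₀ n) n
  have h3 := hy_big n
  have h4 : M ≤ (n:ℝ) := Nat.le_ceil M
  linarith

end
end
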